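/- Let Q₁, Q₂, Q₃ be 2×2 complex matrices and set R_j = −(1/2)γ_j for j = 1, 2, 3. Suppose that −½Q₁ + R₂Q₃ + Q₂R₃ − R₃Q₂ − Q₃R₂ = 0, −½Q₂ + R₃Q₁ + Q₃R₁ − R₁Q₃ − Q₁R₃ = 0, and −½Q₃ + R₁Q₂ + Q₁R₂ − R₂Q₁ − Q₂R₁ = 0. Then Q₁ = Q₂ = Q₃ = 0. -/
import Mathlib


open Complex Matrix

noncomputable section

/-- The spin matrices `γ₁, γ₂, γ₃`. -/
def γ1 : Matrix (Fin 2) (Fin 2) ℂ := !![I, 0; 0, -I]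
def γ2 : Matrix (Fin 2) (Fin 2) ℂ := !![0, -1; 1, 0]
def γ3 : Matrix (Fin 2) (Fin 2) ℂ := !![0, I; I, 0]

/-- The residues `R_j = −(1/2)γ_j` of rank-2 Nahm data at a singularity with `k_p = 2`. -/
def R1 : Matrix (Fin 2) (Fin 2) ℂ := (-(1 / 2) : ℂ) • γ1
def R2 : Matrix (Fin 2) (Fin 2) ℂ := (-(1 / 2) : ℂ) • γ2
def R3 : Matrix (Fin 2) (Fin 2) ℂ := (-(1 / 2) : ℂ) • γ3

/-- Nahm's equation rules out a `t^{−1/2}` term in rank-2 Nahm data: if `Q₁, Q₂, Q₃`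
satisfy the three coefficient equations then they all vanish. -/
theorem rank_two_no_half_power_term
    (Q1 Q2 Q3 : Matrix (Fin 2) (Fin 2) ℂ)
    (h1 : -(1 / 2 : ℂ) • Q1 + R2 * Q3 + Q2 * R3 - R3 * Q2 - Q3 * R2 = 0)
    (h2 : -(1 / 2 : ℂ) • Q2 + R3 * Q1 + Q3 * R1 - R1 * Q3 - Q1 * R3 = 0)
    (h3 : -(1 / 2 : ℂ) • Q3 + R1 * Q2 + Q1 * R2 - R2 * Q1 - Q2 * R1 = 0) :
    Q1 = 0 ∧ Q2 = 0 ∧ Q3 = 0 := by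
  rw [← Matrix.ext_iff] at h1 h2 h3
  simp only [R1, R2, R3, γ1, γ2, γ3, Matrix.add_apply, Matrix.sub_apply, Matrix.smul_apply,
    Matrix.mul_apply, Fin.sum_univ_two, Matrix.zero_apply, smul_eq_mul] at h1 h2 h3
  have a00 := h1 0 0; have a01 := h1 0 1; have a10 := h1 1 0; have a11 := h1 1 1
  have b00 := h2 0 0; have b01 := h2 0 1; have b10 := h2 1 0; have b11 := h2 1 1
  have c00 := h3 0 0; have c01 := h3 0 1; have c10 := h3 1 0; have c11 := h3 1 1
  norm_num [Matrix.of_apply, Matrix.cons_val_zero, Matrix.cons_val_one, Matrix.head_cons] at a00 a01 a10 a11 b00 b01 b10 b11 c00 c01 c10 c11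
  have hI : (I:ℂ) * I = -1 := Complex.I_mul_I
  refine ⟨?_, ?_, ?_⟩ <;> ext i j <;> fin_cases i <;> fin_cases j <;>
      simp only [Matrix.zero_apply]
  · show Q1 0 0 = 0
    linear_combination (-10/9 : ℂ)*a00 + (-8/9 : ℂ)*a11 + (-2/9 : ℂ)*I*b01 + (2/9 : ℂ)*I*b10 + (2/9 : ℂ)*c01 + (2/9 : ℂ)*c10 + ((2/9 : ℂ))*(Q1 0 0)*hI + ((-2/9 : ℂ))*(Q1 1 1)*hI + ((2/9 : ℂ))*(Q3 0 1)*hI + ((2/9 : ℂ))*(Q3 1 0)*hI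
  · show Q1 0 1 = 0
    linear_combination (2/3 : ℂ)*a01 + (-2/3 : ℂ)*I*b00 + (2/3 : ℂ)*I*b11 + (-2/3 : ℂ)*c00 + (2/3 : ℂ)*c11 + ((2/3 : ℂ))*(Q1 0 1)*hI + ((-2/3 : ℂ))*(Q1 1 0)*hI
  · show Q1 1 0 = 0
    linear_combination (2/3 : ℂ)*a10 + (2/3 : ℂ)*I*b00 + (-2/3 : ℂ)*I*b11 + (-2/3 : ℂ)*c00 + (2/3 : ℂ)*c11 + ((-2/3 : ℂ))*(Q1 0 1)*hI + ((2/3 : ℂ))*(Q1 1 0)*hI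
  · show Q1 1 1 = 0
    linear_combination (-8/9 : ℂ)*a00 + (-10/9 : ℂ)*a11 + (2/9 : ℂ)*I*b01 + (-2/9 : ℂ)*I*b10 + (-2/9 : ℂ)*c01 + (-2/9 : ℂ)*c10 + ((-2/9 : ℂ))*(Q1 0 0)*hI + ((2/9 : ℂ))*(Q1 1 1)*hI + ((-2/9 : ℂ))*(Q3 0 1)*hI + ((-2/9 : ℂ))*(Q3 1 0)*hI
  · show Q2 0 0 = 0
    linear_combination (2/3 : ℂ)*I*a01 + (-2/3 : ℂ)*I*a10 + (-2/3 : ℂ)*b00 + (-4/3 : ℂ)*b11 + ((2/3 : ℂ))*(Q2 0 0)*hI + ((-2/3 : ℂ))*(Q2 1 1)*hI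
  · show Q2 0 1 = 0
    linear_combination (2/9 : ℂ)*I*a00 + (-2/9 : ℂ)*I*a11 + (2/9 : ℂ)*b01 + (4/9 : ℂ)*b10 + (8/9 : ℂ)*I*c01 + (-4/9 : ℂ)*I*c10 + ((10/9 : ℂ))*(Q2 0 1)*hI + ((2/9 : ℂ))*(Q2 1 0)*hI
  · show Q2 1 0 = 0
    linear_combination (-2/9 : ℂ)*I*a00 + (2/9 : ℂ)*I*a11 + (4/9 : ℂ)*b01 + (2/9 : ℂ)*b10 + (4/9 : ℂ)*I*c01 + (-8/9 : ℂ)*I*c10 + ((2/9 : ℂ))*(Q2 0 1)*hI + ((10/9 : ℂ))*(Q2 1 0)*hI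
  · show Q2 1 1 = 0
    linear_combination (-2/3 : ℂ)*I*a01 + (2/3 : ℂ)*I*a10 + (-4/3 : ℂ)*b00 + (-2/3 : ℂ)*b11 + ((-2/3 : ℂ))*(Q2 0 0)*hI + ((2/3 : ℂ))*(Q2 1 1)*hI
  · show Q3 0 0 = 0
    linear_combination (-2/3 : ℂ)*a01 + (-2/3 : ℂ)*a10 + (-2/3 : ℂ)*c00 + (-4/3 : ℂ)*c11
  · show Q3 0 1 = 0
    linear_combination (2/9 : ℂ)*a00 + (-2/9 : ℂ)*a11 + (-8/9 : ℂ)*I*b01 + (-4/9 : ℂ)*I*b10 + (2/9 : ℂ)*c01 + (-4/9 : ℂ)*c10 + ((2/9 : ℂ))*(Q1 0 0)*hI + ((-2/9 : ℂ))*(Q1 1 1)*hI + ((8/9 : ℂ))*(Q3 0 1)*hI + ((-4/9 : ℂ))*(Q3 1 0)*hI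
  · show Q3 1 0 = 0
    linear_combination (2/9 : ℂ)*a00 + (-2/9 : ℂ)*a11 + (4/9 : ℂ)*I*b01 + (8/9 : ℂ)*I*b10 + (-4/9 : ℂ)*c01 + (2/9 : ℂ)*c10 + ((2/9 : ℂ))*(Q1 0 0)*hI + ((-2/9 : ℂ))*(Q1 1 1)*hI + ((-4/9 : ℂ))*(Q3 0 1)*hI + ((8/9 : ℂ))*(Q3 1 0)*hI
  · show Q3 1 1 = 0
    linear_combination (2/3 : ℂ)*a01 + (2/3 : ℂ)*a10 + (-4/3 : ℂ)*c00 + (-2/3 : ℂ)*c11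

end
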